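/- Fix k₀ ∈ ℕ, c, C > 0, and γ ∈ (1/2, 1]. Suppose {s_k} is a nonnegative real sequence satisfying s_k ≤ c/(12γ) and s_{k+1}² ≤ s_k² − c k^{−γ} s_k + C k^{−2γ} for all k ≥ k₀. Then there exists a constant C_ub depending only on c, C, γ, k₀ such that s_k ≤ C_ub · k^{−γ} for all k ≥ 1. -/

import Mathlib

open Filter Topology

private lemma aux_sq_le {a b : ℝ} (ha : 0 ≤ a) (hb : 0 ≤ b) (h : a ^ 2 ≤ b ^ 2) : a ≤ b := by
  nlinarith

set_option maxHeartbeats 1000000 in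
/-- Deterministic sequence lemma: if a nonnegative sequence satisfies
`s_k ≤ c/(12γ)` and `s_{k+1}² ≤ s_k² − c k^{−γ} s_k + C k^{−2γ}` for all `k ≥ k₀`, with
`γ ∈ (1/2, 1]`, then `s_k ≤ C_ub · k^{−γ}` for all `k ≥ 1` and some constant `C_ub`. -/
theorem sequence_decay_of_squared_recursion
    (k0 : ℕ) (c C γ : ℝ) (hc : 0 < c) (hC : 0 < C) (hγ : 1 / 2 < γ ∧ γ ≤ 1)
    (s : ℕ → ℝ) (hpos : ∀ k, 0 ≤ s k)
    (hbd : ∀ k, k0 ≤ k → s k ≤ c / (12 * γ))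
    (hrec : ∀ k, k0 ≤ k →
      s (k + 1) ^ 2 ≤ s k ^ 2 - c * (k : ℝ) ^ (-γ) * s k + C * (k : ℝ) ^ (-(2 * γ))) :
    ∃ Cub : ℝ, ∀ k : ℕ, 1 ≤ k → s k ≤ Cub * (k : ℝ) ^ (-γ) := by
  obtain ⟨hγ1, hγ2⟩ := hγ
  have hγ0 : (0:ℝ) < γ := by linarith
  set T : ℝ := 2 * C / c with hT
  have hT0 : 0 < T := by positivity
  have hcT : c * T = 2 * C := by rw [hT]; field_simp
  -- an opaque B with T^2 + C = B^2
  obtain ⟨B, hB0, hB2⟩ : ∃ B : ℝ, 0 ≤ B ∧ T ^ 2 + C = B ^ 2 :=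
    ⟨Real.sqrt (T ^ 2 + C), Real.sqrt_nonneg _, (Real.sq_sqrt (by positivity)).symm⟩
  set M0 : ℝ := max (2 * B) (c / 2) with hM0
  have hM0B : 2 * B ≤ M0 := le_max_left _ _
  have hM0c : c / 2 ≤ M0 := le_max_right _ _
  -- an opaque threshold index K
  obtain ⟨K, hK1, hKk0, hKc⟩ :
      ∃ K : ℕ, 1 ≤ K ∧ k0 ≤ K ∧ 4 * γ * M0 / c ≤ (K:ℝ) := by
    refine ⟨max (max k0 1) (Nat.ceil (4 * γ * M0 / c)),
      le_trans (le_max_right k0 1) (le_max_left _ _),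
      le_trans (le_max_left k0 1) (le_max_left _ _), ?_⟩
    refine le_trans (Nat.le_ceil _) ?_
    exact_mod_cast Nat.cast_le.mpr (le_max_right (max k0 1) _)
  have hK1' : (1:ℝ) ≤ (K:ℝ) := by exact_mod_cast hK1
  have hKγ : (K:ℝ) ^ γ ≤ (K:ℝ) := by
    have h := Real.rpow_le_rpow_of_exponent_le hK1' hγ2
    rwa [Real.rpow_one] at h
  -- an opaque constant M
  obtain ⟨M, hM0le, hMbase, hKbig⟩ :
      ∃ M : ℝ, M0 ≤ M ∧ c / (12 * γ) * (K:ℝ) ^ γ ≤ M ∧ 4 * γ * M ≤ c * (K:ℝ) := by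
    refine ⟨max M0 (c / (12 * γ) * (K:ℝ) ^ γ), le_max_left _ _, le_max_right _ _, ?_⟩
    rcases max_cases M0 (c / (12 * γ) * (K:ℝ) ^ γ) with ⟨h, _⟩ | ⟨h, _⟩ <;> rw [h]
    · have := (div_le_iff₀ hc).mp hKc
      linarith
    · have h1 : 4 * γ * (c / (12 * γ) * (K:ℝ) ^ γ) = c * (K:ℝ) ^ γ / 3 := by
        field_simp; ring
      rw [h1]
      nlinarith [mul_nonneg hc.le (sub_nonneg.mpr hKγ)]
  have hMc2 : c / 2 ≤ M := le_trans hM0c hM0le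
  have hM2B : 2 * B ≤ M := le_trans hM0B hM0le
  have hMpos : 0 < M := lt_of_lt_of_le (by positivity) hMc2
  -- main induction
  have main : ∀ k, K ≤ k → s k ≤ M * (k:ℝ) ^ (-γ) := by
    intro k hk
    induction k, hk using Nat.le_induction with
    | base =>
      have hKpos : (0:ℝ) < (K:ℝ) := by linarith
      have hKγγ : (K:ℝ) ^ γ * (K:ℝ) ^ (-γ) = 1 := by
        rw [← Real.rpow_add hKpos]; simp
      calc s K ≤ c / (12 * γ) := hbd K hKk0
        _ = (c / (12 * γ) * (K:ℝ) ^ γ) * (K:ℝ) ^ (-γ) := by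
            rw [mul_assoc, hKγγ, mul_one]
        _ ≤ M * (K:ℝ) ^ (-γ) :=
            mul_le_mul_of_nonneg_right hMbase (Real.rpow_nonneg hKpos.le _)
    | succ k hk ih =>
      have hkk0 : k0 ≤ k := le_trans hKk0 hk
      have hx1 : (1:ℝ) ≤ (k:ℝ) := by exact_mod_cast le_trans hK1 hk
      have hx0 : (0:ℝ) < (k:ℝ) := by linarith
      set x : ℝ := (k:ℝ) with hxdef
      set e : ℝ := x ^ (-γ) with hedef
      have he0 : 0 < e := Real.rpow_pos_of_pos hx0 _
      have he2 : x ^ (-(2 * γ)) = e ^ 2 := by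
        rw [hedef, sq, ← Real.rpow_add hx0]; ring_nf
      have hcast : ((k + 1 : ℕ) : ℝ) = x + 1 := by push_cast; ring
      set f : ℝ := (x + 1) ^ (-γ) with hfdef
      have hxp1 : (0:ℝ) < x + 1 := by linarith
      have hf0 : 0 < f := Real.rpow_pos_of_pos hxp1 _
      have hrec' := hrec k hkk0
      rw [he2] at hrec'
      have hgoal : s (k + 1) ≤ M * f := by
        rcases le_or_gt (s k) (T * e) with hsmall | hbig
        · -- small case
          have hs0 := hpos k
          have h1 : s (k + 1) ^ 2 ≤ (B * e) ^ 2 := by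
            have hne : 0 ≤ c * e * s k := by positivity
            have hsq : s k ^ 2 ≤ T ^ 2 * e ^ 2 := by
              have h := mul_le_mul hsmall hsmall hs0 (by positivity)
              nlinarith [h]
            nlinarith [hrec', hsq, hB2, sq_nonneg e]
          have hs1 : s (k + 1) ≤ B * e :=
            aux_sq_le (hpos _) (by positivity) h1
          have h2 : e ≤ 2 * f := by
            have hp : 0 < x ^ γ := Real.rpow_pos_of_pos hx0 _
            have hq : 0 < (x + 1) ^ γ := Real.rpow_pos_of_pos hxp1 _
            have ha : (x + 1) ^ γ ≤ (2 * x) ^ γ :=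
              Real.rpow_le_rpow hxp1.le (by linarith) hγ0.le
            have hb : (2 * x) ^ γ = (2:ℝ) ^ γ * x ^ γ :=
              Real.mul_rpow (by norm_num) hx0.le
            have hc2 : (2:ℝ) ^ γ ≤ 2 := by
              have h := Real.rpow_le_rpow_of_exponent_le one_le_two hγ2
              rwa [Real.rpow_one] at h
            have hqp : (x + 1) ^ γ ≤ 2 * x ^ γ := by
              calc (x + 1) ^ γ ≤ (2:ℝ) ^ γ * x ^ γ := by rw [← hb]; exact ha
                _ ≤ 2 * x ^ γ := mul_le_mul_of_nonneg_right hc2 hp.le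
            rw [hedef, hfdef, Real.rpow_neg hx0.le, Real.rpow_neg hxp1.le,
              inv_eq_one_div, inv_eq_one_div, mul_one_div, div_le_div_iff₀ hp hq]
            linarith
          calc s (k + 1) ≤ B * e := hs1
            _ ≤ B * (2 * f) := mul_le_mul_of_nonneg_left h2 hB0
            _ = (2 * B) * f := by ring
            _ ≤ M * f := mul_le_mul_of_nonneg_right hM2B hf0.le
        · -- big case
          have hA : 0 ≤ M * e - s k := by
            rw [hedef, hxdef]; linarith [ih]
          have hCe : C * e ^ 2 ≤ c / 2 * e * s k := by
            have hprod : 0 ≤ (c / 2 * e) * (s k - T * e) :=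
              mul_nonneg (mul_nonneg (by linarith) he0.le) (sub_nonneg.mpr hbig.le)
            have hCe2 : C * e ^ 2 = c * T / 2 * e ^ 2 := by rw [hcT]; ring
            nlinarith [hprod, hCe2]
          have h1 : s (k + 1) ^ 2 ≤ s k ^ 2 - c / 2 * e * s k := by
            linarith [hrec', hCe]
          have h2 : s k ^ 2 - c / 2 * e * s k ≤ M ^ 2 * e ^ 2 - c / 2 * M * e ^ 2 := by
            have hBfac : 0 ≤ M * e + s k - c / 2 * e := by
              have := mul_le_mul_of_nonneg_right hMc2 he0.le
              linarith [hpos k]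
            nlinarith [mul_nonneg hA hBfac]
          -- Bernoulli step
          set p : ℝ := x ^ (2 * γ) with hpdef
          set q : ℝ := (x + 1) ^ (2 * γ) with hqdef
          have hp : 0 < p := Real.rpow_pos_of_pos hx0 _
          have hq : 0 < q := Real.rpow_pos_of_pos hxp1 _
          have he2' : e ^ 2 = p⁻¹ := by
            rw [← he2, hpdef, ← Real.rpow_neg hx0.le]
          have hf2' : f ^ 2 = q⁻¹ := by
            rw [hfdef, hqdef, ← Real.rpow_neg hxp1.le, sq, ← Real.rpow_add hxp1]
            ring_nf
          have hber : 1 + (2 * γ) * (-(1 / (x + 1))) ≤ (1 + (-(1 / (x + 1)))) ^ (2 * γ) := by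
            apply one_add_mul_self_le_rpow_one_add
            · have : 1 / (x + 1) ≤ 1 := by
                rw [div_le_one hxp1]; linarith
              linarith
            · linarith
          have hratio : 1 - 2 * γ / (x + 1) ≤ p / q := by
            have hbase : 1 + (-(1 / (x + 1))) = x / (x + 1) := by
              field_simp
              ring
            have hdiv : (x / (x + 1)) ^ (2 * γ) = p / q :=
              Real.div_rpow hx0.le hxp1.le _
            rw [hbase, hdiv] at hber
            have heq : 1 + 2 * γ * (-(1 / (x + 1))) = 1 - 2 * γ / (x + 1) := by ring
            linarith [heq ▸ hber]
          have hxK : (K:ℝ) ≤ x := by rw [hxdef]; exact_mod_cast hk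
          have hsmallfrac : 2 * γ / (x + 1) ≤ c / (2 * M) := by
            rw [div_le_div_iff₀ hxp1 (by positivity)]
            have hcx : c * (K:ℝ) ≤ c * x := mul_le_mul_of_nonneg_left hxK hc.le
            linarith
          have key : (M - c / 2) * q ≤ M * p := by
            have h4 : 1 - c / (2 * M) ≤ p / q := le_trans (by linarith) hratio
            have h5 : (1 - c / (2 * M)) * M = M - c / 2 := by
              field_simp
            calc (M - c / 2) * q = ((1 - c / (2 * M)) * M) * q := by rw [h5]
              _ ≤ ((p / q) * M) * q :=
                  mul_le_mul_of_nonneg_right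
                    (mul_le_mul_of_nonneg_right h4 hMpos.le) hq.le
              _ = M * p := by field_simp
          have h3 : M ^ 2 * e ^ 2 - c / 2 * M * e ^ 2 ≤ M ^ 2 * f ^ 2 := by
            rw [he2', hf2']
            have hlhs : M ^ 2 * p⁻¹ - c / 2 * M * p⁻¹ = (M * (M - c / 2)) / p := by
              rw [div_eq_mul_inv]; ring
            have hrhs : M ^ 2 * q⁻¹ = M ^ 2 / q := by
              rw [div_eq_mul_inv]
            rw [hlhs, hrhs, div_le_div_iff₀ hp hq]
            calc M * (M - c / 2) * q = M * ((M - c / 2) * q) := by ring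
              _ ≤ M * (M * p) := mul_le_mul_of_nonneg_left key hMpos.le
              _ = M ^ 2 * p := by ring
          have hfin : s (k + 1) ^ 2 ≤ (M * f) ^ 2 := by
            have hmf : (M * f) ^ 2 = M ^ 2 * f ^ 2 := by ring
            rw [hmf]
            linarith
          exact aux_sq_le (hpos _) (by positivity) hfin
      rw [hcast]
      exact hgoal
  -- assemble the final constant
  refine ⟨M + ∑ j ∈ Finset.range K, s j * (j:ℝ) ^ γ, ?_⟩
  have hsum0 : 0 ≤ ∑ j ∈ Finset.range K, s j * (j:ℝ) ^ γ :=
    Finset.sum_nonneg fun j _ => mul_nonneg (hpos j) (Real.rpow_nonneg (Nat.cast_nonneg j) _)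
  intro k hk
  have hx1 : (1:ℝ) ≤ (k:ℝ) := by exact_mod_cast hk
  have hx0 : (0:ℝ) < (k:ℝ) := by linarith
  have hkneg : 0 ≤ (k:ℝ) ^ (-γ) := (Real.rpow_pos_of_pos hx0 _).le
  rcases le_or_gt K k with h | h
  · calc s k ≤ M * (k:ℝ) ^ (-γ) := main k h
      _ ≤ (M + ∑ j ∈ Finset.range K, s j * (j:ℝ) ^ γ) * (k:ℝ) ^ (-γ) := by
          apply mul_le_mul_of_nonneg_right _ hkneg
          linarith
  · have hmem : k ∈ Finset.range K := Finset.mem_range.mpr h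
    have hle : s k * (k:ℝ) ^ γ ≤ ∑ j ∈ Finset.range K, s j * (j:ℝ) ^ γ :=
      Finset.single_le_sum
        (fun j _ => mul_nonneg (hpos j) (Real.rpow_nonneg (Nat.cast_nonneg j) _)) hmem
    have hγγ : (k:ℝ) ^ γ * (k:ℝ) ^ (-γ) = 1 := by
      rw [← Real.rpow_add hx0]; simp
    calc s k = (s k * (k:ℝ) ^ γ) * (k:ℝ) ^ (-γ) := by
          rw [mul_assoc, hγγ, mul_one]
      _ ≤ (M + ∑ j ∈ Finset.range K, s j * (j:ℝ) ^ γ) * (k:ℝ) ^ (-γ) := by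
          apply mul_le_mul_of_nonneg_right _ hkneg
          linarith
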